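/- If x is an irrational real number, then (1/N)·∑_{k=1}^{N} sin²(kπx) converges to 1/2 as N → ∞. -/

import Mathlib

open Real Filter

theorem cesaro_sin_sq_irrational (x : ℝ) (hx : Irrational x) :
    Tendsto (fun N : ℕ =>
        (1 / (N : ℝ)) * ∑ k ∈ Finset.Icc 1 N, Real.sin ((k : ℝ) * Real.pi * x) ^ 2)
      atTop (nhds (1 / 2)) := by
  set z : ℂ := Complex.exp ((2 * Real.pi * x : ℝ) * Complex.I) with hzdef
  have hz1 : z ≠ 1 := by
    rw [hzdef]
    intro h
    rw [Complex.exp_eq_one_iff] at h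
    obtain ⟨n, hn⟩ := h
    apply hx.ne_int n
    have h2 : ((2 * Real.pi * x : ℝ) : ℂ) = (n : ℂ) * (2 * Real.pi) :=
      mul_right_cancel₀ Complex.I_ne_zero (by rw [hn]; ring)
    have h3 : (2 * Real.pi * x : ℝ) = (n : ℝ) * (2 * Real.pi) := by
      exact_mod_cast h2
    have hπ := Real.pi_ne_zero
    field_simp at h3
    nlinarith [Real.pi_pos]
  have hnorm : ‖z‖ = 1 := Complex.norm_exp_ofReal_mul_I _
  have hzpow : ∀ k : ℕ, (z ^ k).re = Real.cos ((k : ℝ) * (2 * Real.pi * x)) := by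
    intro k
    rw [hzdef, ← Complex.exp_nat_mul]
    have : (k : ℂ) * (((2 * Real.pi * x : ℝ)) * Complex.I)
        = ((k * (2 * Real.pi * x) : ℝ) : ℂ) * Complex.I := by push_cast; ring
    rw [this, Complex.exp_ofReal_mul_I_re]
  have key : ∀ N : ℕ, (∑ k ∈ Finset.Icc 1 N, z ^ k) * (z - 1) = z ^ (N + 1) - z := by
    intro N
    induction N with
    | zero => simp
    | succ n ih =>
        rw [Finset.sum_Icc_succ_top (by omega), add_mul, ih]
        ring
  have hz1pos : 0 < ‖z - 1‖ := by
    simpa [sub_eq_zero] using hz1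
  have hbound : ∀ N : ℕ, ‖∑ k ∈ Finset.Icc 1 N, z ^ k‖
      ≤ 2 / ‖z - 1‖ := by
    intro N
    rw [le_div_iff₀ hz1pos, ← norm_mul, key N]
    calc ‖z ^ (N + 1) - z‖ ≤ ‖z ^ (N + 1)‖ + ‖z‖ :=
          norm_sub_le _ _
      _ = 2 := by rw [norm_pow, hnorm]; norm_num
  -- the cosine Cesàro average tends to 0
  have hg : Tendsto (fun N : ℕ => (1 / (N : ℝ)) *
      ∑ k ∈ Finset.Icc 1 N, Real.cos ((k : ℝ) * (2 * Real.pi * x))) atTop (nhds 0) := by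
    refine squeeze_zero_norm (fun N => ?_)
      (tendsto_const_div_atTop_nhds_zero_nat (2 / ‖z - 1‖))
    have hsum : ∑ k ∈ Finset.Icc 1 N, Real.cos ((k : ℝ) * (2 * Real.pi * x))
        = (∑ k ∈ Finset.Icc 1 N, z ^ k).re := by
      rw [Complex.re_sum]
      exact Finset.sum_congr rfl fun k _ => (hzpow k).symm
    have h1 : |(∑ k ∈ Finset.Icc 1 N, z ^ k).re| ≤ 2 / ‖z - 1‖ :=
      le_trans (Complex.abs_re_le_norm _) (hbound N)
    have hN0 : (0 : ℝ) ≤ 1 / (N : ℝ) := by positivity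
    simp only [norm_mul, Real.norm_eq_abs, hsum]
    rw [abs_of_nonneg hN0]
    calc 1 / (N : ℝ) * |(∑ k ∈ Finset.Icc 1 N, z ^ k).re|
        ≤ 1 / (N : ℝ) * (2 / ‖z - 1‖) := by
          exact mul_le_mul_of_nonneg_left h1 hN0
      _ = 2 / ‖z - 1‖ * (1 / N) := by ring
      _ = 2 / ‖z - 1‖ / N := by ring
  have hfin : Tendsto (fun N : ℕ => 1 / 2 - (1 / 2) * ((1 / (N : ℝ)) *
      ∑ k ∈ Finset.Icc 1 N, Real.cos ((k : ℝ) * (2 * Real.pi * x))))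
      atTop (nhds (1 / 2)) := by
    have := (tendsto_const_nhds (α := ℕ) (f := atTop) (x := (1 / 2 : ℝ))).sub
      (hg.const_mul (1 / 2 : ℝ))
    simpa using this
  apply hfin.congr'
  filter_upwards [eventually_ge_atTop 1] with N hN
  have hNne : (N : ℝ) ≠ 0 := by positivity
  have hsum : ∑ k ∈ Finset.Icc 1 N, Real.sin ((k : ℝ) * Real.pi * x) ^ 2
      = ∑ k ∈ Finset.Icc 1 N,
        (1 / 2 - Real.cos ((k : ℝ) * (2 * Real.pi * x)) / 2) := by
    refine Finset.sum_congr rfl fun k _ => ?_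
    rw [Real.sin_sq_eq_half_sub]
    congr 2
    ring
  rw [hsum, Finset.sum_sub_distrib, Finset.sum_const, Nat.card_Icc]
  simp only [Nat.add_sub_cancel, nsmul_eq_mul, ← Finset.sum_div]
  have hhalf : (1 / (N : ℝ)) * ((N : ℝ) * (1 / 2)) = 1 / 2 := by field_simp
  rw [mul_sub, hhalf]
  ring
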